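/- arXiv:2008.02856 — 5 statements merged into one kernel-verified Lean document; each statement's English description precedes it below -/
import Mathlib

section
/- Let β > 0 and 0 < α < 2/(λ₁ + β). Then there exists a real number ρ with ϱ ≤ ρ < 1 such that for every column index j ∈ {1, …, d} and every iteration t ≥ 0, ‖k_j(t+1) − k_{j,β}‖ ≤ ρ · ‖k_j(t) − k_{j,β}‖, where k_j(t) denotes the j-th column of K(t) and k_{j,β} the j-th column of K_β. -/
open Matrix Finset

/-- Euclidean norm of a vector in `ℝ^d`. -/
noncomputable def euclEnorm {d : ℕ} (v : Fin d → ℝ) : ℝ :=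
  Real.sqrt (∑ i, v i ^ 2)

/-- The `j`-th column of a matrix. -/
def mcol {n d : ℕ} (M : Matrix (Fin n) (Fin d) ℝ) (j : Fin d) : Fin n → ℝ :=
  fun i => M i j

lemma orth_sum {d : ℕ} (V : Matrix (Fin d) (Fin d) ℝ) (hV : Vᵀ * V = 1) (u : Fin d → ℝ) :
    ∑ i, (V.mulVec u) i ^ 2 = ∑ i, u i ^ 2 := by
  have h1 : V.mulVec u ⬝ᵥ V.mulVec u = u ⬝ᵥ u := by
    rw [Matrix.dotProduct_mulVec, ← Matrix.mulVec_transpose, Matrix.mulVec_mulVec, hV,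
      Matrix.one_mulVec]
  simpa [dotProduct, sq] using h1

lemma contraction_bound {d : ℕ} (V : Matrix (Fin d) (Fin d) ℝ) (hV : Vᵀ * V = 1)
    (c : Fin d → ℝ) (ρ : ℝ) (hρ : 0 ≤ ρ) (hc : ∀ i, |c i| ≤ ρ) (v : Fin d → ℝ) :
    euclEnorm ((V * Matrix.diagonal c * Vᵀ).mulVec v) ≤ ρ * euclEnorm v := by
  have hVVt : V * Vᵀ = 1 := mul_eq_one_comm.mp hV
  have hVt : (Vᵀ)ᵀ * Vᵀ = 1 := by rw [Matrix.transpose_transpose]; exact hVVt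
  set w := Vᵀ.mulVec v with hw
  have hvec : (V * Matrix.diagonal c * Vᵀ).mulVec v = V.mulVec (fun i => c i * w i) := by
    have hdw : (Matrix.diagonal c).mulVec w = fun i => c i * w i := by
      funext i; exact Matrix.mulVec_diagonal _ _ _
    rw [← Matrix.mulVec_mulVec, ← Matrix.mulVec_mulVec, ← hw, hdw]
  rw [hvec]
  unfold euclEnorm
  rw [orth_sum V hV]
  have hsum : ∑ i, (c i * w i) ^ 2 ≤ ρ ^ 2 * ∑ i, w i ^ 2 := by
    rw [Finset.mul_sum]
    apply Finset.sum_le_sum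
    intro i _
    rw [mul_pow]
    have : (c i) ^ 2 ≤ ρ ^ 2 := by
      rw [← sq_abs]
      exact pow_le_pow_left₀ (abs_nonneg _) (hc i) 2
    nlinarith [sq_nonneg (w i)]
  calc Real.sqrt (∑ i, (c i * w i) ^ 2) ≤ Real.sqrt (ρ ^ 2 * ∑ i, w i ^ 2) :=
        Real.sqrt_le_sqrt hsum
    _ = ρ * Real.sqrt (∑ i, w i ^ 2) := by
        rw [Real.sqrt_mul (sq_nonneg ρ), Real.sqrt_sq hρ]
    _ = ρ * Real.sqrt (∑ i, v i ^ 2) := by rw [orth_sum Vᵀ hVt]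

/-- Lemma 2 of the paper: linear convergence of the columns of the
iterative pre-conditioner matrix `K(t)` to the columns of `K_β = (AᵀA + βI)⁻¹`. -/
theorem ipg_preconditioner_column_contraction
    (n d : ℕ) (hd : 0 < d)
    (A : Matrix (Fin n) (Fin d) ℝ)
    (lam : Fin d → ℝ) (V : Matrix (Fin d) (Fin d) ℝ)
    (hV : Vᵀ * V = 1)
    (hdiag : Aᵀ * A = V * Matrix.diagonal lam * Vᵀ)
    (hanti : Antitone lam)
    (α β : ℝ) (hβ : 0 < β)
    (hα0 : 0 < α) (hα : α < 2 / (lam ⟨0, hd⟩ + β))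
    (K : ℕ → Matrix (Fin d) (Fin d) ℝ)
    (hK : ∀ t, K (t + 1) = K t - α • ((Aᵀ * A + β • 1) * K t - 1)) :
    ∃ ρ : ℝ,
      (lam ⟨0, hd⟩ - lam ⟨d - 1, by omega⟩) /
          (lam ⟨0, hd⟩ + lam ⟨d - 1, by omega⟩ + 2 * β) ≤ ρ ∧
      ρ < 1 ∧
      ∀ (j : Fin d) (t : ℕ),
        euclEnorm (mcol (K (t + 1)) j - mcol ((Aᵀ * A + β • 1)⁻¹) j) ≤
          ρ * euclEnorm (mcol (K t) j - mcol ((Aᵀ * A + β • 1)⁻¹) j) := by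
  have hne : Nonempty (Fin d) := ⟨⟨0, hd⟩⟩
  have hVVt : V * Vᵀ = 1 := mul_eq_one_comm.mp hV
  -- eigenvalues are nonnegative
  have hlam0 : ∀ i, 0 ≤ lam i := by
    intro i
    have h1 : Matrix.diagonal lam = (A * V)ᵀ * (A * V) := by
      rw [Matrix.transpose_mul, Matrix.mul_assoc, ← Matrix.mul_assoc Aᵀ A V, hdiag]
      rw [Matrix.mul_assoc (V * Matrix.diagonal lam) Vᵀ V, hV, Matrix.mul_one,
        ← Matrix.mul_assoc, hV, Matrix.one_mul]
    have h2 := congrArg (fun X => X i i) h1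
    simp only [Matrix.diagonal_apply_eq, Matrix.mul_apply, Matrix.transpose_apply] at h2
    rw [h2]
    exact Finset.sum_nonneg fun k _ => mul_self_nonneg _
  -- the matrix M and its spectral decomposition
  set M : Matrix (Fin d) (Fin d) ℝ := Aᵀ * A + β • 1 with hM
  have hMspec : M = V * Matrix.diagonal (fun i => lam i + β) * Vᵀ := by
    have hdcomp : Matrix.diagonal (fun i => lam i + β) =
        Matrix.diagonal lam + β • (1 : Matrix (Fin d) (Fin d) ℝ) := by
      rw [Matrix.smul_one_eq_diagonal, ← Matrix.diagonal_add]
    rw [hM, hdiag, hdcomp, Matrix.mul_add, Matrix.add_mul]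
    congr 1
    simp [Matrix.mul_smul, Matrix.smul_mul, hVVt]
  have hlamb : ∀ i, 0 < lam i + β := fun i => by have := hlam0 i; linarith
  -- M is invertible
  have hdetV : V.det * V.det = 1 := by
    have := congrArg Matrix.det hV
    rwa [Matrix.det_mul, Matrix.det_transpose, Matrix.det_one] at this
  have hdetM : M.det = ∏ i, (lam i + β) := by
    rw [hMspec, Matrix.det_mul, Matrix.det_mul, Matrix.det_transpose,
      Matrix.det_diagonal]
    have : V.det * (∏ i, (lam i + β)) * V.det = V.det * V.det * ∏ i, (lam i + β) := by
      ring
    rw [this, hdetV, one_mul]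
  have hMinv : M * M⁻¹ = 1 := by
    apply Matrix.mul_nonsing_inv
    rw [hdetM]
    exact (Finset.prod_pos fun i _ => hlamb i).ne'.isUnit
  -- error recurrence
  have hE : ∀ t, K (t + 1) - M⁻¹ = (1 - α • M) * (K t - M⁻¹) := by
    intro t
    have expand : (1 - α • M) * (K t - M⁻¹) =
        (K t - M⁻¹) - α • (M * K t - M * M⁻¹) := by
      rw [Matrix.sub_mul, Matrix.one_mul, Matrix.smul_mul, Matrix.mul_sub, smul_sub]
    rw [expand, hMinv, hK t]
    abel
  -- spectral form of the iteration matrix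
  set c : Fin d → ℝ := fun i => 1 - α * (lam i + β) with hc
  have hNspec : (1 : Matrix (Fin d) (Fin d) ℝ) - α • M = V * Matrix.diagonal c * Vᵀ := by
    have hdc : Matrix.diagonal c = (1 : Matrix (Fin d) (Fin d) ℝ) -
        α • Matrix.diagonal (fun i => lam i + β) := by
      ext i k
      rcases eq_or_ne i k with rfl | h
      · simp [hc]
      · simp [Matrix.diagonal_apply_ne _ h, Matrix.one_apply_ne h]
    rw [hdc, hMspec]
    simp [Matrix.mul_sub, Matrix.sub_mul, Matrix.mul_smul, Matrix.smul_mul, hVVt,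
      Matrix.mul_assoc]
  -- the contraction factor
  have hlam_le : ∀ i, lam i ≤ lam ⟨0, hd⟩ := fun i => hanti (Fin.mk_le_mk.mpr (Nat.zero_le _))
  have habs : ∀ i, |c i| < 1 := by
    intro i
    rw [abs_lt]
    have h1 : 0 < α * (lam i + β) := mul_pos hα0 (hlamb i)
    have h2 : α * (lam i + β) < 2 := by
      have hb : 0 < lam ⟨0, hd⟩ + β := hlamb _
      have := (lt_div_iff₀ hb).mp hα
      have := hlam_le i
      nlinarith
    constructor <;> simp [hc] <;> linarith
  set ρ₀ : ℝ := Finset.univ.sup' Finset.univ_nonempty (fun i => |c i|) with hρ₀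
  have hρ₀lt : ρ₀ < 1 := by
    rw [hρ₀, Finset.sup'_lt_iff]
    exact fun i _ => habs i
  have hρ₀le : ∀ i, |c i| ≤ ρ₀ := fun i => Finset.le_sup' (fun i => |c i|) (Finset.mem_univ i)
  have hρ₀0 : 0 ≤ ρ₀ := le_trans (abs_nonneg _) (hρ₀le ⟨0, hd⟩)
  set q : ℝ := (lam ⟨0, hd⟩ - lam ⟨d - 1, by omega⟩) /
      (lam ⟨0, hd⟩ + lam ⟨d - 1, by omega⟩ + 2 * β) with hq
  have hqlt : q < 1 := by
    rw [hq]
    have h1 := hlam0 ⟨d - 1, by omega⟩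
    have h2 := hlam0 ⟨0, hd⟩
    rw [div_lt_one (by linarith)]
    linarith
  refine ⟨max q ρ₀, le_max_left _ _, max_lt hqlt hρ₀lt, ?_⟩
  intro j t
  have hcol : mcol (K (t + 1)) j - mcol M⁻¹ j = mcol ((1 - α • M) * (K t - M⁻¹)) j := by
    have := hE t
    funext i
    simp only [mcol, Pi.sub_apply, Matrix.sub_apply] at *
    rw [← Matrix.sub_apply, this]
  have hcol2 : mcol ((1 - α • M) * (K t - M⁻¹)) j =
      (V * Matrix.diagonal c * Vᵀ).mulVec (mcol (K t - M⁻¹) j) := by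
    rw [← hNspec]
    funext i
    simp [mcol, Matrix.mul_apply, Matrix.mulVec, dotProduct]
  have hcol3 : mcol (K t - M⁻¹) j = mcol (K t) j - mcol M⁻¹ j := rfl
  rw [hcol, hcol2, hcol3]
  exact contraction_bound V hV c (max q ρ₀) (le_trans hρ₀0 (le_max_right _ _))
    (fun i => le_trans (hρ₀le i) (le_max_right _ _)) _
end

section
/- Suppose AᵀA ≠ 0, β > 0, 0 < α < 2/(λ₁ + β), and 0 < δ < 2(λ₁ + β)/λ₁. Then there exist real numbers μ and ρ with μ* ≤ μ < 1 and ϱ ≤ ρ < 1 such that for every iteration t ≥ 0, ‖g(t+1)‖ ≤ (μ + δ λ₁ ‖K(0) − K_β‖_F · ρ^{t+1}) · ‖g(t)‖. -/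
open Matrix Finset

/-- Euclidean norm of a vector in `ℝ^d`. -/
noncomputable def vecEnorm {d : ℕ} (v : Fin d → ℝ) : ℝ :=
  Real.sqrt (∑ i, v i ^ 2)

/-- Frobenius norm of a matrix. -/
noncomputable def frob {n d : ℕ} (M : Matrix (Fin n) (Fin d) ℝ) : ℝ :=
  Real.sqrt (∑ i, ∑ j, M i j ^ 2)

lemma enorm_nonneg' {d : ℕ} (v : Fin d → ℝ) : 0 ≤ vecEnorm v := Real.sqrt_nonneg _
lemma frob_nonneg' {n d : ℕ} (M : Matrix (Fin n) (Fin d) ℝ) : 0 ≤ frob M := Real.sqrt_nonneg _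

lemma enorm_sq {d : ℕ} (v : Fin d → ℝ) : (vecEnorm v) ^ 2 = ∑ i, v i ^ 2 := by
  rw [vecEnorm, Real.sq_sqrt]; positivity

lemma frob_sq {n d : ℕ} (M : Matrix (Fin n) (Fin d) ℝ) : (frob M) ^ 2 = ∑ i, ∑ j, M i j ^ 2 := by
  rw [frob, Real.sq_sqrt]; positivity

lemma enorm_le_of_sq_le_sq {d e : ℕ} {u : Fin d → ℝ} {v : Fin e → ℝ} {c : ℝ}
    (hc : 0 ≤ c) (h : ∑ i, u i ^ 2 ≤ c ^ 2 * ∑ i, v i ^ 2) : vecEnorm u ≤ c * vecEnorm v := by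
  nlinarith [enorm_sq u, enorm_sq v, enorm_nonneg' u, enorm_nonneg' v,
    mul_nonneg hc (enorm_nonneg' v), sq_nonneg (vecEnorm u - c * vecEnorm v),
    sq_nonneg (vecEnorm u + c * vecEnorm v)]

lemma enorm_mulVec_le_frob {n d : ℕ} (M : Matrix (Fin n) (Fin d) ℝ) (v : Fin d → ℝ) :
    vecEnorm (M.mulVec v) ≤ frob M * vecEnorm v := by
  apply enorm_le_of_sq_le_sq (frob_nonneg' M)
  rw [frob_sq, Finset.sum_mul]
  apply Finset.sum_le_sum
  intro i _
  calc (M.mulVec v i) ^ 2 = (∑ j, M i j * v j) ^ 2 := by rfl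
    _ ≤ (∑ j, M i j ^ 2) * ∑ j, v j ^ 2 := Finset.sum_mul_sq_le_sq_mul_sq _ _ _

lemma frob_mul_le {d e : ℕ} {P : Matrix (Fin d) (Fin d) ℝ} {c : ℝ} (hc : 0 ≤ c)
    (hP : ∀ v : Fin d → ℝ, vecEnorm (P.mulVec v) ≤ c * vecEnorm v)
    (M : Matrix (Fin d) (Fin e) ℝ) : frob (P * M) ≤ c * frob M := by
  have key : ∀ j, ∑ i, ((P * M) i j) ^ 2 ≤ c ^ 2 * ∑ i, (M i j) ^ 2 := by
    intro j
    have h1 := hP (fun i => M i j)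
    have h2 : (vecEnorm (P.mulVec fun i => M i j)) ^ 2 ≤ (c * vecEnorm fun i => M i j) ^ 2 := by
      have := enorm_nonneg' (P.mulVec fun i => M i j)
      nlinarith
    rw [enorm_sq, mul_pow, enorm_sq] at h2
    calc ∑ i, ((P * M) i j) ^ 2 = ∑ i, (P.mulVec fun i => M i j) i ^ 2 := by
          simp [Matrix.mul_apply, Matrix.mulVec, dotProduct]
      _ ≤ c ^ 2 * ∑ i, (M i j) ^ 2 := h2
  have h2 : (frob (P * M)) ^ 2 ≤ (c * frob M) ^ 2 := by
    rw [frob_sq, mul_pow, frob_sq, Finset.sum_comm, mul_comm (c ^ 2) _,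
      Finset.sum_comm (f := fun i j => M i j ^ 2), Finset.sum_mul]
    exact Finset.sum_le_sum fun j _ => by rw [mul_comm]; exact key j
  nlinarith [frob_nonneg' (P * M), frob_nonneg' M, mul_nonneg hc (frob_nonneg' M)]

lemma enorm_mulVec_orth {d : ℕ} {V : Matrix (Fin d) (Fin d) ℝ} (hV : Vᵀ * V = 1)
    (u : Fin d → ℝ) : vecEnorm (V.mulVec u) = vecEnorm u := by
  have h : V.mulVec u ⬝ᵥ V.mulVec u = u ⬝ᵥ u := by
    rw [dotProduct_mulVec, ← Matrix.mulVec_transpose, Matrix.mulVec_mulVec, hV,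
      Matrix.one_mulVec]
  have h2 : ∑ i, (V.mulVec u) i ^ 2 = ∑ i, u i ^ 2 := by
    simpa [dotProduct, sq] using h
  rw [vecEnorm, h2, vecEnorm]

lemma enorm_sandwich_le {d : ℕ} {V : Matrix (Fin d) (Fin d) ℝ} (hV : Vᵀ * V = 1)
    (e : Fin d → ℝ) (v : Fin d → ℝ) {c : ℝ} (hc : 0 ≤ c)
    (h : ∀ i, (e i) ^ 2 * (Vᵀ.mulVec v i) ^ 2 ≤ c ^ 2 * (Vᵀ.mulVec v i) ^ 2) :
    vecEnorm ((V * Matrix.diagonal e * Vᵀ).mulVec v) ≤ c * vecEnorm v := by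
  have hVV : V * Vᵀ = 1 := mul_eq_one_comm.mp hV
  have hVt : (Vᵀ)ᵀ * Vᵀ = 1 := by rw [Matrix.transpose_transpose]; exact hVV
  set y := Vᵀ.mulVec v with hy
  have h1 : (V * Matrix.diagonal e * Vᵀ).mulVec v
      = V.mulVec ((Matrix.diagonal e).mulVec y) := by
    rw [Matrix.mulVec_mulVec, Matrix.mulVec_mulVec, Matrix.mul_assoc]
  have h2 : vecEnorm v = vecEnorm y := (enorm_mulVec_orth hVt v).symm
  rw [h1, enorm_mulVec_orth hV, h2]
  apply enorm_le_of_sq_le_sq hc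
  rw [Finset.mul_sum]
  apply Finset.sum_le_sum
  intro i _
  rw [Matrix.mulVec_diagonal, mul_pow]
  exact h i

lemma sandwich_mul {d : ℕ} {V : Matrix (Fin d) (Fin d) ℝ} (hV : Vᵀ * V = 1)
    (a b : Fin d → ℝ) :
    (V * Matrix.diagonal a * Vᵀ) * (V * Matrix.diagonal b * Vᵀ)
      = V * Matrix.diagonal (fun i => a i * b i) * Vᵀ := by
  simp only [Matrix.mul_assoc]
  rw [← Matrix.mul_assoc Vᵀ V, hV, Matrix.one_mul, ← Matrix.mul_assoc (Matrix.diagonal a),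
    Matrix.diagonal_mul_diagonal]

lemma one_sandwich {d : ℕ} {V : Matrix (Fin d) (Fin d) ℝ} (hV : Vᵀ * V = 1) :
    (1 : Matrix (Fin d) (Fin d) ℝ) = V * Matrix.diagonal (fun _ => (1:ℝ)) * Vᵀ := by
  have hVV : V * Vᵀ = 1 := mul_eq_one_comm.mp hV
  rw [Matrix.diagonal_one, Matrix.mul_one, hVV]

lemma smul_sandwich {d : ℕ} (V : Matrix (Fin d) (Fin d) ℝ) (c : ℝ) (a : Fin d → ℝ) :
    c • (V * Matrix.diagonal a * Vᵀ) = V * Matrix.diagonal (fun i => c * a i) * Vᵀ := by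
  rw [show Matrix.diagonal (fun i => c * a i) = c • Matrix.diagonal a by
      rw [← Matrix.diagonal_smul]; rfl]
  rw [Matrix.mul_smul, Matrix.smul_mul]

lemma sub_sandwich {d : ℕ} (V : Matrix (Fin d) (Fin d) ℝ) (a b : Fin d → ℝ) :
    V * Matrix.diagonal a * Vᵀ - V * Matrix.diagonal b * Vᵀ
      = V * Matrix.diagonal (fun i => a i - b i) * Vᵀ := by
  rw [← Matrix.sub_mul, ← Matrix.mul_sub, Matrix.diagonal_sub]

lemma add_sandwich {d : ℕ} (V : Matrix (Fin d) (Fin d) ℝ) (a b : Fin d → ℝ) :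
    V * Matrix.diagonal a * Vᵀ + V * Matrix.diagonal b * Vᵀ
      = V * Matrix.diagonal (fun i => a i + b i) * Vᵀ := by
  rw [← Matrix.add_mul, ← Matrix.mul_add, Matrix.diagonal_add]
lemma enorm_eq_norm {d : ℕ} (v : Fin d → ℝ) :
    vecEnorm v = ‖(WithLp.equiv 2 (Fin d → ℝ)).symm v‖ := by
  rw [EuclideanSpace.norm_eq]
  simp [vecEnorm, Real.norm_eq_abs, sq_abs]

lemma vecEnorm_add_le {d : ℕ} (u v : Fin d → ℝ) : vecEnorm (u + v) ≤ vecEnorm u + vecEnorm v := by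
  simp only [enorm_eq_norm]
  rw [show (WithLp.equiv 2 (Fin d → ℝ)).symm (u + v)
      = (WithLp.equiv 2 (Fin d → ℝ)).symm u + (WithLp.equiv 2 (Fin d → ℝ)).symm v from rfl]
  exact norm_add_le _ _

lemma enorm_smul' {d : ℕ} (c : ℝ) (v : Fin d → ℝ) : vecEnorm (c • v) = |c| * vecEnorm v := by
  simp only [enorm_eq_norm]
  rw [show (WithLp.equiv 2 (Fin d → ℝ)).symm (c • v)
      = c • (WithLp.equiv 2 (Fin d → ℝ)).symm v from rfl]
  rw [norm_smul, Real.norm_eq_abs]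

set_option maxHeartbeats 1000000 in
/-- Theorem 1(i) of the paper: the gradients of the IPG method satisfy
`‖g(t+1)‖ ≤ (μ + δ λ₁ ‖K(0) − K_β‖_F ρ^{t+1}) ‖g(t)‖` with `μ* ≤ μ < 1` and `ϱ ≤ ρ < 1`. -/
theorem ipg_gradient_contraction
    (n d : ℕ) (hd : 0 < d)
    (A : Matrix (Fin n) (Fin d) ℝ) (B : Fin n → ℝ)
    (hAnz : Aᵀ * A ≠ 0)
    (lam : Fin d → ℝ) (V : Matrix (Fin d) (Fin d) ℝ)
    (hV : Vᵀ * V = 1)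
    (hdiag : Aᵀ * A = V * Matrix.diagonal lam * Vᵀ)
    (hanti : Antitone lam)
    (r : ℕ) (hr1 : 1 ≤ r) (hrd : r ≤ d)
    (hlamr : 0 < lam ⟨r - 1, by omega⟩)
    (hzero : ∀ j : Fin d, r ≤ (j : ℕ) → lam j = 0)
    (α β δ : ℝ) (hβ : 0 < β)
    (hα0 : 0 < α) (hα : α < 2 / (lam ⟨0, hd⟩ + β))
    (hδ0 : 0 < δ) (hδ : δ < 2 * ((lam ⟨0, hd⟩ + β) / lam ⟨0, hd⟩))
    (K : ℕ → Matrix (Fin d) (Fin d) ℝ)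
    (hK : ∀ t, K (t + 1) = K t - α • ((Aᵀ * A + β • 1) * K t - 1))
    (x : ℕ → Fin d → ℝ) (g : ℕ → Fin d → ℝ)
    (hg : ∀ t, g t = Aᵀ.mulVec (A.mulVec (x t) - B))
    (hx : ∀ t, x (t + 1) = x t - δ • (K (t + 1)).mulVec (g t)) :
    ∃ μ ρ : ℝ,
      (lam ⟨0, hd⟩ - lam ⟨r - 1, by omega⟩) /
          (lam ⟨0, hd⟩ + lam ⟨r - 1, by omega⟩ +
            2 * (lam ⟨0, hd⟩ * lam ⟨r - 1, by omega⟩ / β)) ≤ μ ∧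
      μ < 1 ∧
      (lam ⟨0, hd⟩ - lam ⟨d - 1, by omega⟩) /
          (lam ⟨0, hd⟩ + lam ⟨d - 1, by omega⟩ + 2 * β) ≤ ρ ∧
      ρ < 1 ∧
      ∀ t : ℕ,
        vecEnorm (g (t + 1)) ≤
          (μ + δ * lam ⟨0, hd⟩ * frob (K 0 - (Aᵀ * A + β • 1)⁻¹) * ρ ^ (t + 1)) *
            vecEnorm (g t) := by
  have hVV : V * Vᵀ = 1 := mul_eq_one_comm.mp hV
  set i0 : Fin d := ⟨0, hd⟩ with hi0
  set ir : Fin d := ⟨r - 1, by omega⟩ with hir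
  set id1 : Fin d := ⟨d - 1, by omega⟩ with hid1
  -- eigenvalue facts
  have hlam0r : lam ir ≤ lam i0 := hanti (by simp [hi0, hir, Fin.le_def])
  have hlam0 : 0 < lam i0 := lt_of_lt_of_le hlamr hlam0r
  have hlam_nonneg : ∀ i, 0 ≤ lam i := by
    intro i
    by_cases h : r ≤ (i : ℕ)
    · rw [hzero i h]
    · exact le_of_lt (lt_of_lt_of_le hlamr (hanti (by simp [hir, Fin.le_def]; omega)))
  have hlam_le : ∀ i, lam i ≤ lam i0 := fun i => hanti (by simp [hi0, Fin.le_def])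
  have hlamd_le : ∀ i, lam id1 ≤ lam i := fun i => hanti (by
    simp [hid1, Fin.le_def]; omega)
  have hlamd0 : 0 ≤ lam id1 := hlam_nonneg _
  -- monotone h-function
  have hmono : ∀ {a b : ℝ}, 0 ≤ a → a ≤ b →
      a * (a + β)⁻¹ ≤ b * (b + β)⁻¹ := by
    intro a b ha hab
    rw [← div_eq_mul_inv, ← div_eq_mul_inv, div_le_div_iff₀ (by linarith) (by linarith)]
    nlinarith
  have hpos : ∀ {a : ℝ}, 0 ≤ a → (0:ℝ) < a + β := fun ha => by linarith
  -- choose μ and ρ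
  set μ : ℝ := max |1 - δ * (lam i0 * (lam i0 + β)⁻¹)| |1 - δ * (lam ir * (lam ir + β)⁻¹)|
    with hμdef
  set ρ : ℝ := max |1 - α * (lam i0 + β)| |1 - α * (lam id1 + β)| with hρdef
  have hρ0 : 0 ≤ ρ := le_trans (abs_nonneg _) (le_max_left _ _)
  have hμ0 : 0 ≤ μ := le_trans (abs_nonneg _) (le_max_left _ _)
  -- μ < 1
  have hdelb : ∀ {l : ℝ}, 0 < l → l ≤ lam i0 → |1 - δ * (l * (l + β)⁻¹)| < 1 := by
    intro l hl hle
    have h1 : 0 < l * (l + β)⁻¹ := mul_pos hl (inv_pos.mpr (by linarith))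
    have h2 : δ * (l * (l + β)⁻¹) < 2 := by
      have hh : l * (l + β)⁻¹ ≤ lam i0 * (lam i0 + β)⁻¹ := hmono hl.le hle
      have h3 : δ * (lam i0 * (lam i0 + β)⁻¹) < 2 := by
        rw [← div_eq_mul_inv]
        have h4 : (0:ℝ) < lam i0 / (lam i0 + β) := by positivity
        have h5 : 2 * ((lam i0 + β) / lam i0) * (lam i0 / (lam i0 + β)) = 2 := by
          field_simp
        nlinarith
      nlinarith [mul_pos hlam0 (inv_pos.mpr (hpos hlam0.le) : (0:ℝ) < (lam i0 + β)⁻¹)]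
    rw [abs_lt]
    constructor <;> nlinarith
  have hμ1 : μ < 1 := max_lt (hdelb hlam0 le_rfl) (hdelb hlamr hlam0r)
  -- ρ < 1
  have halb : ∀ {l : ℝ}, 0 ≤ l → l ≤ lam i0 → |1 - α * (l + β)| < 1 := by
    intro l hl hle
    have h1 : 0 < α * (l + β) := mul_pos hα0 (by linarith)
    have h2 : α * (l + β) < 2 := by
      have : α * (lam i0 + β) < 2 := by
        rw [lt_div_iff₀ (hpos hlam0.le)] at hα; linarith
      nlinarith
    rw [abs_lt]; constructor <;> nlinarith
  have hρ1 : ρ < 1 := max_lt (halb hlam0.le le_rfl) (halb hlamd0 (hlam_le _))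
  -- μ* ≤ μ
  have hμstar : (lam i0 - lam ir) /
      (lam i0 + lam ir + 2 * (lam i0 * lam ir / β)) ≤ μ := by
    set a : ℝ := lam ir * (lam ir + β)⁻¹ with ha
    set b : ℝ := lam i0 * (lam i0 + β)⁻¹ with hb
    have ha0 : 0 < a := mul_pos hlamr (inv_pos.mpr (hpos hlamr.le))
    have hb0 : 0 < b := mul_pos hlam0 (inv_pos.mpr (hpos hlam0.le))
    have hab : a ≤ b := hmono hlamr.le hlam0r
    have heq : (lam i0 - lam ir) / (lam i0 + lam ir + 2 * (lam i0 * lam ir / β))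
        = (b - a) / (a + b) := by
      rw [div_eq_div_iff (by positivity) (by positivity), ha, hb]
      field_simp
      ring
    rw [heq, div_le_iff₀ (by positivity)]
    have h1 : b * (1 - δ * a) - a * (1 - δ * b) = b - a := by ring
    nlinarith [le_abs_self (1 - δ * a), neg_abs_le (1 - δ * b),
      le_max_right |1 - δ * (lam i0 * (lam i0 + β)⁻¹)| |1 - δ * (lam ir * (lam ir + β)⁻¹)|,
      le_max_left |1 - δ * (lam i0 * (lam i0 + β)⁻¹)| |1 - δ * (lam ir * (lam ir + β)⁻¹)|]
  -- ϱ ≤ ρ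
  have hρstar : (lam i0 - lam id1) / (lam i0 + lam id1 + 2 * β) ≤ ρ := by
    set a : ℝ := lam id1 + β with ha
    set b : ℝ := lam i0 + β with hb
    have ha0 : 0 < a := hpos hlamd0
    have hb0 : 0 < b := hpos hlam0.le
    have heq : (lam i0 - lam id1) / (lam i0 + lam id1 + 2 * β) = (b - a) / (a + b) := by
      rw [ha, hb]; ring_nf
    rw [heq, div_le_iff₀ (by positivity)]
    nlinarith [le_abs_self (1 - α * a), neg_abs_le (1 - α * b),
      le_max_right |1 - α * (lam i0 + β)| |1 - α * (lam id1 + β)|,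
      le_max_left |1 - α * (lam i0 + β)| |1 - α * (lam id1 + β)|]
  refine ⟨μ, ρ, hμstar, hμ1, hρstar, hρ1, ?_⟩
    -- matrix setup
  set S : Matrix (Fin d) (Fin d) ℝ := Aᵀ * A + β • 1 with hSdef
  have hβ1 : (β:ℝ) • (1 : Matrix (Fin d) (Fin d) ℝ)
      = V * Matrix.diagonal (fun _ => β) * Vᵀ := by
    rw [one_sandwich hV, smul_sandwich]
    norm_num
  have hS : S = V * Matrix.diagonal (fun i => lam i + β) * Vᵀ := by
    rw [hSdef, hdiag, hβ1, add_sandwich]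
  have hright : S * (V * Matrix.diagonal (fun i => (lam i + β)⁻¹) * Vᵀ) = 1 := by
    rw [hS, sandwich_mul hV,
      show (fun i => (lam i + β) * (lam i + β)⁻¹) = fun _ => (1:ℝ) from
        funext fun i => mul_inv_cancel₀ (ne_of_gt (hpos (hlam_nonneg i))),
      ← one_sandwich hV]
  have hSinv : S⁻¹ = V * Matrix.diagonal (fun i => (lam i + β)⁻¹) * Vᵀ :=
    Matrix.inv_eq_right_inv hright
  have hSS : S * S⁻¹ = 1 := by rw [hSinv]; exact hright
  set P : Matrix (Fin d) (Fin d) ℝ := 1 - α • S with hPdef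
  have hP : P = V * Matrix.diagonal (fun i => 1 - α * (lam i + β)) * Vᵀ := by
    rw [hPdef, hS, smul_sandwich, one_sandwich hV, sub_sandwich]
  set M : Matrix (Fin d) (Fin d) ℝ := 1 - δ • (Aᵀ * A * S⁻¹) with hMdef
  have hM : M = V * Matrix.diagonal (fun i => 1 - δ * (lam i * (lam i + β)⁻¹)) * Vᵀ := by
    rw [hMdef, hdiag, hSinv, sandwich_mul hV, smul_sandwich, one_sandwich hV, sub_sandwich]
  -- P contracts with factor ρ
  have hPvec : ∀ v : Fin d → ℝ, vecEnorm (P.mulVec v) ≤ ρ * vecEnorm v := by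
    intro v
    rw [hP]
    apply enorm_sandwich_le hV _ _ hρ0
    intro i
    apply mul_le_mul_of_nonneg_right _ (sq_nonneg _)
    have h1 : |1 - α * (lam i + β)| ≤ ρ :=
      abs_le_max_abs_abs (by nlinarith [hlam_le i]) (by nlinarith [hlamd_le i])
    calc (1 - α * (lam i + β)) ^ 2 = |1 - α * (lam i + β)| ^ 2 := (sq_abs _).symm
      _ ≤ ρ ^ 2 := pow_le_pow_left₀ (abs_nonneg _) h1 2
  -- Frobenius decay of K t - S⁻¹
  have hEfrob : ∀ t, frob (K t - S⁻¹) ≤ ρ ^ t * frob (K 0 - S⁻¹) := by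
    intro t
    induction t with
    | zero => simp
    | succ t ih =>
      have hrec : K (t + 1) - S⁻¹ = P * (K t - S⁻¹) := by
        rw [hK t, hPdef]
        simp only [Matrix.sub_mul, Matrix.mul_sub, Matrix.one_mul, smul_mul_assoc,
          smul_sub, hSS]
        abel
      rw [hrec]
      calc frob (P * (K t - S⁻¹)) ≤ ρ * frob (K t - S⁻¹) := frob_mul_le hρ0 hPvec _
        _ ≤ ρ * (ρ ^ t * frob (K 0 - S⁻¹)) := mul_le_mul_of_nonneg_left ih hρ0
        _ = ρ ^ (t + 1) * frob (K 0 - S⁻¹) := by ring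
  -- coordinates of g vanish on the kernel
  have hAV : (A * V)ᵀ * (A * V) = Matrix.diagonal lam := by
    rw [Matrix.transpose_mul,
      show Vᵀ * Aᵀ * (A * V) = Vᵀ * (Aᵀ * A) * V by simp only [Matrix.mul_assoc],
      hdiag]
    simp only [Matrix.mul_assoc]
    rw [← Matrix.mul_assoc Vᵀ V, hV, Matrix.one_mul, Matrix.mul_one]
  have hgcoord : ∀ t (j : Fin d), r ≤ (j : ℕ) → Vᵀ.mulVec (g t) j = 0 := by
    intro t j hj
    have hsum : ∑ k, ((A * V) k j) ^ 2 = 0 := by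
      have h := congrArg (fun M => M j j) hAV
      simp only [Matrix.mul_apply, Matrix.transpose_apply, Matrix.diagonal_apply_eq] at h
      rw [hzero j hj] at h
      simpa [sq, Matrix.mul_apply] using h
    have hcol : ∀ k, (A * V) k j = 0 := by
      intro k
      have := (Finset.sum_eq_zero_iff_of_nonneg (fun k _ => sq_nonneg ((A * V) k j))).mp
        hsum k (Finset.mem_univ k)
      exact pow_eq_zero_iff (two_ne_zero) |>.mp this
    rw [hg t, Matrix.mulVec_mulVec, ← Matrix.transpose_mul]
    simp [Matrix.mulVec, dotProduct, Matrix.transpose_apply, hcol]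
  -- M contracts g with factor μ
  have hMg : ∀ t, vecEnorm (M.mulVec (g t)) ≤ μ * vecEnorm (g t) := by
    intro t
    rw [hM]
    apply enorm_sandwich_le hV _ _ hμ0
    intro i
    by_cases hi : r ≤ (i : ℕ)
    · rw [hgcoord t i hi]
      simp
    · have hlo : lam ir ≤ lam i := hanti (by simp [hir, Fin.le_def]; omega)
      have hia : lam ir * (lam ir + β)⁻¹ ≤ lam i * (lam i + β)⁻¹ := hmono hlamr.le hlo
      have hib : lam i * (lam i + β)⁻¹ ≤ lam i0 * (lam i0 + β)⁻¹ :=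
        hmono (hlam_nonneg i) (hlam_le i)
      have habs : |1 - δ * (lam i * (lam i + β)⁻¹)| ≤ μ :=
        abs_le_max_abs_abs (by nlinarith) (by nlinarith)
      apply mul_le_mul_of_nonneg_right _ (sq_nonneg _)
      calc (1 - δ * (lam i * (lam i + β)⁻¹)) ^ 2
          = |1 - δ * (lam i * (lam i + β)⁻¹)| ^ 2 := (sq_abs _).symm
        _ ≤ μ ^ 2 := pow_le_pow_left₀ (abs_nonneg _) habs 2
  -- gradient recursion
  have hgrec : ∀ t, g (t + 1)
      = M.mulVec (g t) + (-δ) • ((Aᵀ * A * (K (t + 1) - S⁻¹)).mulVec (g t)) := by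
    intro t
    have step1 : Aᵀ.mulVec (A.mulVec (x t - δ • (K (t + 1)).mulVec (g t)) - B)
        = Aᵀ.mulVec (A.mulVec (x t) - B) - δ • ((Aᵀ * A * K (t + 1)).mulVec (g t)) := by
      simp only [Matrix.mulVec_sub, Matrix.mulVec_smul, Matrix.mulVec_mulVec, smul_sub,
        Matrix.mul_assoc]
      abel
    rw [hg (t + 1), hx t, step1, ← hg t, hMdef]
    simp only [Matrix.mul_sub, Matrix.sub_mulVec, Matrix.one_mulVec, smul_sub,
      Matrix.smul_mulVec, neg_smul, smul_sub]
    abel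
  -- conclusion
  intro t
  rw [hgrec t]
  have t1 := hMg t
  have t2 : vecEnorm ((Aᵀ * A * (K (t + 1) - S⁻¹)).mulVec (g t))
      ≤ lam i0 * (frob (K (t + 1) - S⁻¹) * vecEnorm (g t)) := by
    rw [← Matrix.mulVec_mulVec]
    calc vecEnorm ((Aᵀ * A).mulVec ((K (t + 1) - S⁻¹).mulVec (g t)))
        ≤ lam i0 * vecEnorm ((K (t + 1) - S⁻¹).mulVec (g t)) := by
          rw [hdiag]
          apply enorm_sandwich_le hV _ _ hlam0.le
          intro i
          apply mul_le_mul_of_nonneg_right _ (sq_nonneg _)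
          nlinarith [hlam_nonneg i, hlam_le i]
      _ ≤ lam i0 * (frob (K (t + 1) - S⁻¹) * vecEnorm (g t)) :=
          mul_le_mul_of_nonneg_left (enorm_mulVec_le_frob _ _) hlam0.le
  have t3 := hEfrob (t + 1)
  have hge := enorm_nonneg' (g t)
  calc vecEnorm (M.mulVec (g t) + (-δ) • ((Aᵀ * A * (K (t + 1) - S⁻¹)).mulVec (g t)))
      ≤ vecEnorm (M.mulVec (g t))
        + vecEnorm ((-δ) • ((Aᵀ * A * (K (t + 1) - S⁻¹)).mulVec (g t))) := vecEnorm_add_le _ _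
    _ = vecEnorm (M.mulVec (g t))
        + δ * vecEnorm ((Aᵀ * A * (K (t + 1) - S⁻¹)).mulVec (g t)) := by
        rw [enorm_smul', abs_neg, abs_of_pos hδ0]
    _ ≤ (μ + δ * lam i0 * frob (K 0 - S⁻¹) * ρ ^ (t + 1)) * vecEnorm (g t) := by
        have h4 : δ * vecEnorm ((Aᵀ * A * (K (t + 1) - S⁻¹)).mulVec (g t))
            ≤ δ * (lam i0 * (frob (K (t + 1) - S⁻¹) * vecEnorm (g t))) :=
          mul_le_mul_of_nonneg_left t2 hδ0.le
        have h5 : frob (K (t + 1) - S⁻¹) * vecEnorm (g t)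
            ≤ (ρ ^ (t + 1) * frob (K 0 - S⁻¹)) * vecEnorm (g t) :=
          mul_le_mul_of_nonneg_right t3 hge
        nlinarith [mul_nonneg hδ0.le hlam0.le]
end

section
/- Suppose AᵀA ≠ 0, β > 0, 0 < α < 2/(λ₁ + β), and 0 < δ < 2(λ₁ + β)/λ₁. Then the sequence of aggregate gradients converges to zero: for every ε > 0 there exists a positive integer N_ε such that ‖g(t)‖ ≤ ε for all t ≥ N_ε; equivalently, lim_{t→∞} g(t) = 0. -/
open Matrix Finset

/-- Euclidean norm of a vector in `ℝ^d`. -/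
noncomputable def ipgEnorm {d : ℕ} (v : Fin d → ℝ) : ℝ :=
  Real.sqrt (∑ i, v i ^ 2)

set_option maxHeartbeats 1600000 in
/-- Theorem 1(ii) of the paper: the aggregate gradients of the IPG
method converge to zero: for every `ε > 0` there is a positive integer `N_ε` with
`‖g(t)‖ ≤ ε` for all `t ≥ N_ε`. -/
theorem ipg_gradient_convergence
    (n d : ℕ) (hd : 0 < d)
    (A : Matrix (Fin n) (Fin d) ℝ) (B : Fin n → ℝ)
    (hAnz : Aᵀ * A ≠ 0)
    (lam : Fin d → ℝ) (V : Matrix (Fin d) (Fin d) ℝ)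
    (hV : Vᵀ * V = 1)
    (hdiag : Aᵀ * A = V * Matrix.diagonal lam * Vᵀ)
    (hanti : Antitone lam)
    (α β δ : ℝ) (hβ : 0 < β)
    (hα0 : 0 < α) (hα : α < 2 / (lam ⟨0, hd⟩ + β))
    (hδ0 : 0 < δ) (hδ : δ < 2 * ((lam ⟨0, hd⟩ + β) / lam ⟨0, hd⟩))
    (K : ℕ → Matrix (Fin d) (Fin d) ℝ)
    (hK : ∀ t, K (t + 1) = K t - α • ((Aᵀ * A + β • 1) * K t - 1))
    (x : ℕ → Fin d → ℝ) (g : ℕ → Fin d → ℝ)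
    (hg : ∀ t, g t = Aᵀ.mulVec (A.mulVec (x t) - B))
    (hx : ∀ t, x (t + 1) = x t - δ • (K (t + 1)).mulVec (g t)) :
    ∀ ε : ℝ, 0 < ε → ∃ N : ℕ, 0 < N ∧ ∀ t : ℕ, N ≤ t → ipgEnorm (g t) ≤ ε := by
  classical
  set i0 : Fin d := ⟨0, hd⟩ with hi0def
  -- V is orthogonal both ways
  have hVVt : V * Vᵀ = 1 := mul_eq_one_comm.mp hV
  -- Vᵀ (AᵀA) = D Vᵀ
  have hD : Vᵀ * (Aᵀ * A) = Matrix.diagonal lam * Vᵀ := by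
    rw [hdiag, ← Matrix.mul_assoc, ← Matrix.mul_assoc, hV, Matrix.one_mul]
  -- (AV)ᵀ (AV) = diagonal lam
  have hATA : (A * V)ᵀ * (A * V) = Matrix.diagonal lam := by
    rw [Matrix.transpose_mul, Matrix.mul_assoc, ← Matrix.mul_assoc Aᵀ A V,
      ← Matrix.mul_assoc Vᵀ (Aᵀ * A) V, hD, Matrix.mul_assoc, hV, Matrix.mul_one]
  have hlam_eq : ∀ i, lam i = ∑ k, (A * V) k i * (A * V) k i := by
    intro i
    have h := congrFun (congrFun hATA i) i
    rw [Matrix.mul_apply] at h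
    simp only [Matrix.transpose_apply, Matrix.diagonal_apply_eq] at h
    exact h.symm
  have hlam_nonneg : ∀ i, 0 ≤ lam i := by
    intro i; rw [hlam_eq i]; exact Finset.sum_nonneg fun k _ => mul_self_nonneg _
  have hAV0 : ∀ i, lam i = 0 → ∀ k, (A * V) k i = 0 := by
    intro i hi k
    have h0 : ∑ k, (A * V) k i * (A * V) k i = 0 := by rw [← hlam_eq i, hi]
    have := (Finset.sum_eq_zero_iff_of_nonneg (fun k _ => mul_self_nonneg ((A * V) k i))).mp h0
    exact mul_self_eq_zero.mp (this k (Finset.mem_univ k))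
  have hlamle : ∀ i, lam i ≤ lam i0 := fun i => hanti (by simp [hi0def, Fin.le_def])
  have hlam0pos : 0 < lam i0 := by
    rcases lt_or_eq_of_le (hlam_nonneg i0) with h | h
    · exact h
    · exfalso
      apply hAnz
      have hall : lam = 0 := by
        funext i
        have h1 := hlamle i
        have h2 := hlam_nonneg i
        simp only [Pi.zero_apply]
        linarith
      have hz : Matrix.diagonal lam = 0 := by
        rw [hall]; ext i j; by_cases h : i = j <;> simp [Matrix.diagonal_apply, h]
      rw [hdiag, hz, Matrix.mul_zero, Matrix.zero_mul]
  have hdpos : ∀ i, 0 < lam i + β := fun i => by have := hlam_nonneg i; linarith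
  -- quantitative bounds from hα, hδ
  have hα' : α * (lam i0 + β) < 2 := by
    have := (lt_div_iff₀ (hdpos i0)).mp hα
    linarith
  have hδ' : δ * lam i0 < 2 * (lam i0 + β) := by
    rw [mul_div_assoc'] at hδ
    have := (lt_div_iff₀ hlam0pos).mp hδ
    linarith
  -- diagonalized preconditioner
  set M : ℕ → Matrix (Fin d) (Fin d) ℝ := fun t => Vᵀ * K t * V with hMdef
  have hβ1 : (β • (1 : Matrix (Fin d) (Fin d) ℝ)) = Matrix.diagonal fun _ => β := by
    ext i j
    by_cases h : i = j <;> simp [Matrix.one_apply, Matrix.diagonal_apply, h]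
  have hDβ : Vᵀ * (Aᵀ * A + β • 1) = (Matrix.diagonal fun i => lam i + β) * Vᵀ := by
    have h1 : (Matrix.diagonal fun i => lam i + β) = Matrix.diagonal lam + β • 1 := by
      rw [hβ1, ← Matrix.diagonal_add]
    rw [h1, Matrix.mul_add, Matrix.add_mul, hD, Matrix.mul_smul, Matrix.mul_one,
      Matrix.smul_mul, Matrix.one_mul]
  have hMrecM : ∀ t, M (t + 1)
      = M t - α • ((Matrix.diagonal fun i => lam i + β) * M t - 1) := by
    intro t
    show Vᵀ * K (t + 1) * V = _
    rw [hK t, Matrix.mul_sub, Matrix.sub_mul, Matrix.mul_smul, Matrix.smul_mul]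
    have h2 : Vᵀ * ((Aᵀ * A + β • 1) * K t - 1) * V
        = (Matrix.diagonal fun i => lam i + β) * M t - 1 := by
      calc Vᵀ * ((Aᵀ * A + β • 1) * K t - 1) * V
          = Vᵀ * ((Aᵀ * A + β • 1) * K t) * V - Vᵀ * V := by
            rw [Matrix.mul_sub, Matrix.sub_mul, Matrix.mul_one]
        _ = (Matrix.diagonal fun i => lam i + β) * Vᵀ * K t * V - 1 := by
            rw [← Matrix.mul_assoc, hDβ, hV]
        _ = (Matrix.diagonal fun i => lam i + β) * M t - 1 := by
            rw [hMdef]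
            simp only [Matrix.mul_assoc]
    rw [h2]
  have hMrec : ∀ t i j, M (t + 1) i j
      = (1 - α * (lam i + β)) * M t i j + α * (if i = j then 1 else 0) := by
    intro t i j
    have h := congrFun (congrFun (hMrecM t) i) j
    simp only [Matrix.sub_apply, Matrix.smul_apply, Matrix.diagonal_mul,
      Matrix.one_apply, smul_eq_mul] at h
    rw [h]
    by_cases hij : i = j <;> simp [hij] <;> ring
  set e : Fin d → ℝ := fun i => 1 - α * (lam i + β) with hedef
  set C : Fin d → Fin d → ℝ :=
    fun i j => M 0 i j - (if i = j then (lam i + β)⁻¹ else 0) with hCdef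
  have hMclosed : ∀ t i j,
      M t i j = e i ^ t * C i j + (if i = j then (lam i + β)⁻¹ else 0) := by
    intro t
    induction t with
    | zero =>
      intro i j
      simp only [pow_zero, one_mul, hCdef]
      ring
    | succ t ih =>
      intro i j
      rw [hMrec t i j, ih i j]
      by_cases hij : i = j
      · subst hij
        simp only [eq_self_iff_true, if_true, hedef]
        have hne0 : lam i + β ≠ 0 := ne_of_gt (hdpos i)
        field_simp
        ring
      · simp only [if_neg hij, hedef]
        ring
  -- diagonalized gradient
  set y : ℕ → Fin d → ℝ := fun t => Vᵀ.mulVec (g t) with hydef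
  have hgrec : ∀ t, g (t + 1) = g t - δ • (Aᵀ * A).mulVec ((K (t + 1)).mulVec (g t)) := by
    intro t
    rw [hg (t + 1), hx t, hg t, Matrix.mulVec_sub A, Matrix.mulVec_smul,
      sub_right_comm, Matrix.mulVec_sub Aᵀ, Matrix.mulVec_smul,
      Matrix.mulVec_mulVec]
  have hyM : ∀ t, y (t + 1) = y t - δ • (Matrix.diagonal lam * M (t + 1)).mulVec (y t) := by
    intro t
    show Vᵀ.mulVec (g (t + 1)) = _
    rw [hgrec t, Matrix.mulVec_sub, Matrix.mulVec_smul]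
    congr 1
    congr 1
    rw [Matrix.mulVec_mulVec, Matrix.mulVec_mulVec]
    have hmat : Vᵀ * (Aᵀ * A) * K (t + 1) = Matrix.diagonal lam * M (t + 1) * Vᵀ := by
      rw [hD, hMdef]
      calc Matrix.diagonal lam * Vᵀ * K (t + 1)
          = Matrix.diagonal lam * Vᵀ * K (t + 1) * (V * Vᵀ) := by
            rw [hVVt, Matrix.mul_one]
        _ = Matrix.diagonal lam * (Vᵀ * K (t + 1) * V) * Vᵀ := by
            simp only [Matrix.mul_assoc]
    rw [hmat, ← Matrix.mulVec_mulVec]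
  have hyrec : ∀ t i, y (t + 1) i = y t i - δ * (lam i * ∑ j, M (t + 1) i j * y t j) := by
    intro t i
    have h := congrFun (hyM t) i
    rw [h]
    simp only [Pi.sub_apply, Pi.smul_apply, smul_eq_mul]
    congr 1
    congr 1
    simp [Matrix.mulVec, dotProduct, Matrix.diagonal_mul, Finset.mul_sum, mul_assoc]
  have hy0 : ∀ t i, lam i = 0 → y t i = 0 := by
    intro t i hi
    show Vᵀ.mulVec (g t) i = 0
    rw [hg t, Matrix.mulVec_mulVec, ← Matrix.transpose_mul]
    simp only [Matrix.mulVec, dotProduct, Matrix.transpose_apply]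
    exact Finset.sum_eq_zero fun k _ => by rw [hAV0 i hi k, zero_mul]
  -- constants
  have hne : (Finset.univ : Finset (Fin d)).Nonempty := ⟨i0, Finset.mem_univ _⟩
  set r : ℝ := Finset.univ.sup' hne (fun i => |e i|) with hrdef
  have hre : ∀ i, |e i| ≤ r := by
    intro i; rw [hrdef]; exact Finset.le_sup' (fun j => |e j|) (Finset.mem_univ i)
  have hr0 : 0 ≤ r := le_trans (abs_nonneg _) (hre i0)
  have hr1 : r < 1 := by
    rw [hrdef, Finset.sup'_lt_iff]
    intro i _
    rw [abs_lt]
    have h1 : 0 < α * (lam i + β) := mul_pos hα0 (hdpos i)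
    have h2 : α * (lam i + β) < 2 := by
      have := hlamle i
      nlinarith
    constructor <;> simp [hedef] <;> nlinarith
  set S : Finset (Fin d) := Finset.univ.filter (fun i => 0 < lam i) with hSdef
  have hi0S : i0 ∈ S := by simp [hSdef, hlam0pos]
  have hSne : S.Nonempty := ⟨i0, hi0S⟩
  set ρ : ℝ := S.sup' hSne (fun i => |1 - δ * (lam i * (lam i + β)⁻¹)|) with hρdef
  have hρle : ∀ i, 0 < lam i → |1 - δ * (lam i * (lam i + β)⁻¹)| ≤ ρ := by
    intro i hi
    rw [hρdef]
    exact Finset.le_sup' (fun j => |1 - δ * (lam j * (lam j + β)⁻¹)|)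
      (show i ∈ S by rw [hSdef]; simp [hi])
  have hρ0 : 0 ≤ ρ := le_trans (abs_nonneg _) (hρle i0 hlam0pos)
  have hρ1 : ρ < 1 := by
    rw [hρdef, Finset.sup'_lt_iff]
    intro i hi
    rw [hSdef, Finset.mem_filter] at hi
    have hi' : 0 < lam i := hi.2
    have hle : lam i ≤ lam i0 := hlamle i
    have hfpos : 0 < δ * (lam i * (lam i + β)⁻¹) :=
      mul_pos hδ0 (mul_pos hi' (inv_pos.mpr (hdpos i)))
    have hflt : δ * (lam i * (lam i + β)⁻¹) < 2 := by
      rw [← mul_assoc, mul_inv_lt_iff₀ (hdpos i)]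
      nlinarith
    rw [abs_lt]
    constructor <;> nlinarith
  set Csum : Fin d → ℝ := fun i => ∑ j, |C i j| with hCsumdef
  set Cmax : ℝ := Finset.univ.sup' hne Csum with hCmaxdef
  have hCle : ∀ i, Csum i ≤ Cmax := by
    intro i; rw [hCmaxdef]; exact Finset.le_sup' _ (Finset.mem_univ i)
  have hCmax0 : 0 ≤ Cmax := by
    refine le_trans ?_ (hCle i0)
    rw [hCsumdef]
    exact Finset.sum_nonneg fun j _ => abs_nonneg _
  -- key contraction inequality
  have hkey : ∀ t, ‖y (t + 1)‖ ≤ (ρ + δ * lam i0 * Cmax * r ^ (t + 1)) * ‖y t‖ := by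
    intro t
    have hc0 : 0 ≤ δ * lam i0 * Cmax * r ^ (t + 1) :=
      mul_nonneg (mul_nonneg (mul_nonneg hδ0.le hlam0pos.le) hCmax0) (pow_nonneg hr0 _)
    have hRHS0 : 0 ≤ (ρ + δ * lam i0 * Cmax * r ^ (t + 1)) * ‖y t‖ :=
      mul_nonneg (by linarith) (norm_nonneg _)
    rw [pi_norm_le_iff_of_nonneg hRHS0]
    intro i
    rw [Real.norm_eq_abs]
    by_cases hlami : lam i = 0
    · rw [hy0 (t + 1) i hlami, abs_zero]; exact hRHS0
    · have hipos : 0 < lam i := lt_of_le_of_ne (hlam_nonneg i) (Ne.symm hlami)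
      have hstep : y (t + 1) i
          = (1 - δ * (lam i * (lam i + β)⁻¹)) * y t i
            - δ * lam i * e i ^ (t + 1) * ∑ j, C i j * y t j := by
        rw [hyrec t i]
        have hM : ∀ j, M (t + 1) i j * y t j
            = e i ^ (t + 1) * (C i j * y t j)
              + (if i = j then (lam i + β)⁻¹ else 0) * y t j := by
          intro j; rw [hMclosed (t + 1) i j]; ring
        rw [Finset.sum_congr rfl fun j _ => hM j, Finset.sum_add_distrib, ← Finset.mul_sum]
        have hsum : (∑ j, (if i = j then (lam i + β)⁻¹ else 0) * y t j)
            = (lam i + β)⁻¹ * y t i := by simp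
        rw [hsum]; ring
      have h1 : |(1 - δ * (lam i * (lam i + β)⁻¹)) * y t i| ≤ ρ * ‖y t‖ := by
        rw [abs_mul]
        refine mul_le_mul (hρle i hipos) ?_ (abs_nonneg _) hρ0
        rw [← Real.norm_eq_abs]; exact norm_le_pi_norm (y t) i
      have hSb : |∑ j, C i j * y t j| ≤ Cmax * ‖y t‖ := by
        calc |∑ j, C i j * y t j| ≤ ∑ j, |C i j * y t j| := Finset.abs_sum_le_sum_abs _ _
          _ ≤ ∑ j, |C i j| * ‖y t‖ := by
              refine Finset.sum_le_sum fun j _ => ?_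
              rw [abs_mul]
              refine mul_le_mul_of_nonneg_left ?_ (abs_nonneg _)
              rw [← Real.norm_eq_abs]; exact norm_le_pi_norm (y t) j
          _ = Csum i * ‖y t‖ := by rw [hCsumdef, Finset.sum_mul]
          _ ≤ Cmax * ‖y t‖ := mul_le_mul_of_nonneg_right (hCle i) (norm_nonneg _)
      have h2 : |δ * lam i * e i ^ (t + 1) * ∑ j, C i j * y t j|
          ≤ δ * lam i0 * Cmax * r ^ (t + 1) * ‖y t‖ := by
        rw [abs_mul, abs_mul, abs_mul, abs_pow, abs_of_pos hδ0, abs_of_pos hipos]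
        have t1 : δ * lam i ≤ δ * lam i0 := mul_le_mul_of_nonneg_left (hlamle i) hδ0.le
        have t2 : |e i| ^ (t + 1) ≤ r ^ (t + 1) :=
          pow_le_pow_left₀ (abs_nonneg _) (hre i) _
        have t3 : δ * lam i * |e i| ^ (t + 1) ≤ δ * lam i0 * r ^ (t + 1) :=
          mul_le_mul t1 t2 (pow_nonneg (abs_nonneg _) _)
            (mul_nonneg hδ0.le hlam0pos.le)
        calc δ * lam i * |e i| ^ (t + 1) * |∑ j, C i j * y t j|
            ≤ δ * lam i0 * r ^ (t + 1) * (Cmax * ‖y t‖) :=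
              mul_le_mul t3 hSb (abs_nonneg _)
                (mul_nonneg (mul_nonneg hδ0.le hlam0pos.le) (pow_nonneg hr0 _))
          _ = δ * lam i0 * Cmax * r ^ (t + 1) * ‖y t‖ := by ring
      calc |y (t + 1) i|
          ≤ |(1 - δ * (lam i * (lam i + β)⁻¹)) * y t i|
            + |δ * lam i * e i ^ (t + 1) * ∑ j, C i j * y t j| := by
            rw [hstep]; exact abs_sub _ _
        _ ≤ ρ * ‖y t‖ + δ * lam i0 * Cmax * r ^ (t + 1) * ‖y t‖ := add_le_add h1 h2
        _ = (ρ + δ * lam i0 * Cmax * r ^ (t + 1)) * ‖y t‖ := by ring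
  -- limit argument
  set q : ℝ := (1 + ρ) / 2 with hqdef
  have hq0 : 0 ≤ q := by rw [hqdef]; linarith
  have hq1 : q < 1 := by rw [hqdef]; linarith
  have htendc : Filter.Tendsto (fun t : ℕ => δ * lam i0 * Cmax * r ^ (t + 1))
      Filter.atTop (nhds 0) := by
    have hsub : Filter.Tendsto (fun t : ℕ => t + 1) Filter.atTop Filter.atTop := by
      apply Filter.tendsto_atTop.mpr
      intro b
      exact Filter.eventually_atTop.mpr ⟨b, fun t ht => by omega⟩
    have h := ((tendsto_pow_atTop_nhds_zero_of_lt_one hr0 hr1).comp hsub).const_mul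
      (δ * lam i0 * Cmax)
    simpa [Function.comp] using h
  have hev : ∀ᶠ t in Filter.atTop,
      δ * lam i0 * Cmax * r ^ (t + 1) ≤ (1 - ρ) / 2 := by
    have h := htendc.eventually_lt_const (show (0 : ℝ) < (1 - ρ) / 2 by linarith)
    exact h.mono fun t ht => ht.le
  obtain ⟨T, hT⟩ := Filter.eventually_atTop.mp hev
  have hcontr : ∀ t, T ≤ t → ‖y (t + 1)‖ ≤ q * ‖y t‖ := by
    intro t ht
    refine le_trans (hkey t) (mul_le_mul_of_nonneg_right ?_ (norm_nonneg _))
    have := hT t ht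
    rw [hqdef]; linarith
  have hgeo : ∀ k, ‖y (T + k)‖ ≤ ‖y T‖ * q ^ k := by
    intro k
    induction k with
    | zero => simp
    | succ k ih =>
      calc ‖y (T + (k + 1))‖ = ‖y (T + k + 1)‖ := by rw [← Nat.add_assoc]
        _ ≤ q * ‖y (T + k)‖ := hcontr (T + k) (Nat.le_add_right _ _)
        _ ≤ q * (‖y T‖ * q ^ k) := mul_le_mul_of_nonneg_left ih hq0
        _ = ‖y T‖ * q ^ (k + 1) := by ring
  have hytend : Filter.Tendsto (fun t => ‖y t‖) Filter.atTop (nhds 0) := by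
    have hb : ∀ᶠ t in Filter.atTop, ‖y t‖ ≤ ‖y T‖ * q ^ (t - T) := by
      refine Filter.eventually_atTop.mpr ⟨T, fun t ht => ?_⟩
      have h := hgeo (t - T)
      rwa [Nat.add_sub_cancel' ht] at h
    have hsub : Filter.Tendsto (fun t : ℕ => t - T) Filter.atTop Filter.atTop := by
      apply Filter.tendsto_atTop.mpr
      intro b
      exact Filter.eventually_atTop.mpr ⟨b + T, fun t ht => by omega⟩
    have hgt : Filter.Tendsto (fun t : ℕ => ‖y T‖ * q ^ (t - T))
        Filter.atTop (nhds 0) := by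
      have h := ((tendsto_pow_atTop_nhds_zero_of_lt_one hq0 hq1).comp hsub).const_mul ‖y T‖
      simpa [Function.comp] using h
    exact squeeze_zero' (Filter.Eventually.of_forall fun t => norm_nonneg _) hb hgt
  -- relate enorm (g t) to ‖y t‖
  have hgy : ∀ t, g t = V.mulVec (y t) := by
    intro t
    show g t = V.mulVec (Vᵀ.mulVec (g t))
    rw [Matrix.mulVec_mulVec, hVVt, Matrix.one_mulVec]
  have hsq : ∀ t, (∑ i, g t i ^ 2) = ∑ i, y t i ^ 2 := by
    intro t
    have h1 : (∑ i, g t i ^ 2) = g t ⬝ᵥ g t := by simp [dotProduct, pow_two]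
    have h2 : (∑ i, y t i ^ 2) = y t ⬝ᵥ y t := by simp [dotProduct, pow_two]
    rw [h1, h2, hgy t, Matrix.dotProduct_mulVec, ← Matrix.mulVec_transpose,
      Matrix.mulVec_mulVec, hV, Matrix.one_mulVec]
  have henorm : ∀ t, ipgEnorm (g t) ≤ Real.sqrt d * ‖y t‖ := by
    intro t
    rw [ipgEnorm, hsq t]
    have hb : (∑ i, y t i ^ 2) ≤ (d : ℝ) * ‖y t‖ ^ 2 := by
      calc (∑ i, y t i ^ 2) ≤ ∑ _i : Fin d, ‖y t‖ ^ 2 := by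
            refine Finset.sum_le_sum fun i _ => ?_
            have h := norm_le_pi_norm (y t) i
            rw [Real.norm_eq_abs] at h
            calc y t i ^ 2 = |y t i| ^ 2 := (sq_abs _).symm
              _ ≤ ‖y t‖ ^ 2 := pow_le_pow_left₀ (abs_nonneg _) h _
        _ = (d : ℝ) * ‖y t‖ ^ 2 := by
            rw [Finset.sum_const, Finset.card_univ, Fintype.card_fin, nsmul_eq_mul]
    calc Real.sqrt (∑ i, y t i ^ 2) ≤ Real.sqrt ((d : ℝ) * ‖y t‖ ^ 2) :=
          Real.sqrt_le_sqrt hb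
      _ = Real.sqrt d * ‖y t‖ := by
          rw [Real.sqrt_mul (by positivity), Real.sqrt_sq (norm_nonneg _)]
  intro ε hε
  have htend2 : Filter.Tendsto (fun t => Real.sqrt d * ‖y t‖) Filter.atTop (nhds 0) := by
    have h := hytend.const_mul (Real.sqrt d)
    simpa using h
  obtain ⟨N0, hN0⟩ := Filter.eventually_atTop.mp (htend2.eventually_lt_const hε)
  refine ⟨N0 + 1, Nat.succ_pos _, fun t ht => ?_⟩
  exact le_trans (henorm t) (le_of_lt (hN0 t (by omega)))
end

section
/- Under the noisy IPG model (with δ = 1), for every iteration t ≥ 0, ‖z(t+1)‖ ≤ (R(t+1)·R(t)·…·R(1)) · ‖z⁰(0)‖ + (1 + R(t+1) + R(t+1)R(t) + … + R(t+1)R(t)⋯R(1)) · w. -/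
open Matrix Finset

/-- Euclidean norm of a vector in `ℝ^d`. -/
noncomputable def enormR {d : ℕ} (v : Fin d → ℝ) : ℝ :=
  Real.sqrt (∑ i, v i ^ 2)

lemma enormR_nonneg' {d : ℕ} (v : Fin d → ℝ) : 0 ≤ enormR v := Real.sqrt_nonneg _

lemma enormR_eq_norm {d : ℕ} (v : Fin d → ℝ) :
    enormR v = ‖(WithLp.equiv 2 (Fin d → ℝ)).symm v‖ := by
  rw [EuclideanSpace.norm_eq]; simp [enormR, Real.norm_eq_abs, sq_abs]

lemma enormR_add_le {d : ℕ} (u v : Fin d → ℝ) : enormR (u + v) ≤ enormR u + enormR v := by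
  rw [enormR_eq_norm, enormR_eq_norm, enormR_eq_norm]; exact norm_add_le _ _

lemma enormR_neg {d : ℕ} (v : Fin d → ℝ) : enormR (-v) = enormR v := by
  simp [enormR]

lemma enormR_smul {d : ℕ} (c : ℝ) (v : Fin d → ℝ) : enormR (c • v) = |c| * enormR v := by
  rw [enormR_eq_norm, enormR_eq_norm]
  have : (WithLp.equiv 2 (Fin d → ℝ)).symm (c • v) = c • (WithLp.equiv 2 (Fin d → ℝ)).symm v := rfl
  rw [this, norm_smul, Real.norm_eq_abs]

lemma enormR_sum_le {d : ℕ} {ι : Type*} (s : Finset ι) (f : ι → Fin d → ℝ) :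
    enormR (∑ i ∈ s, f i) ≤ ∑ i ∈ s, enormR (f i) := by
  rw [enormR_eq_norm]
  have : (WithLp.equiv 2 (Fin d → ℝ)).symm (∑ i ∈ s, f i)
      = ∑ i ∈ s, (WithLp.equiv 2 (Fin d → ℝ)).symm (f i) := WithLp.toLp_sum 2 (Fin d → ℝ) s f
  rw [this]; exact (norm_sum_le _ _).trans (by simp [enormR_eq_norm])

lemma enormR_eq_sqrt_dot {d : ℕ} (v : Fin d → ℝ) : enormR v = Real.sqrt (v ⬝ᵥ v) := by
  simp [enormR, dotProduct, sq]

lemma enormR_orth {d : ℕ} (M : Matrix (Fin d) (Fin d) ℝ) (hM : Mᵀ * M = 1) (x : Fin d → ℝ) :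
    enormR (M *ᵥ x) = enormR x := by
  rw [enormR_eq_sqrt_dot, enormR_eq_sqrt_dot]
  congr 1
  have h1 : M *ᵥ x = x ᵥ* Mᵀ := by rw [Matrix.vecMul_transpose]
  calc (M *ᵥ x) ⬝ᵥ (M *ᵥ x) = ((M *ᵥ x) ᵥ* M) ⬝ᵥ x := Matrix.dotProduct_mulVec _ _ _
    _ = ((x ᵥ* Mᵀ) ᵥ* M) ⬝ᵥ x := by rw [h1]
    _ = (x ᵥ* (Mᵀ * M)) ⬝ᵥ x := by rw [Matrix.vecMul_vecMul]
    _ = x ⬝ᵥ x := by rw [hM, Matrix.vecMul_one]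

lemma mcol_mul {n d : ℕ} (M : Matrix (Fin n) (Fin n) ℝ) (N : Matrix (Fin n) (Fin d) ℝ) (j : Fin d) :
    mcol (M * N) j = M *ᵥ mcol N j := by
  funext i; simp [mcol, Matrix.mul_apply, Matrix.mulVec, dotProduct]

lemma mcol_sub {n d : ℕ} (M N : Matrix (Fin n) (Fin d) ℝ) (j : Fin d) :
    mcol (M - N) j = mcol M j - mcol N j := rfl

lemma mcol_add {n d : ℕ} (M N : Matrix (Fin n) (Fin d) ℝ) (j : Fin d) :
    mcol (M + N) j = mcol M j + mcol N j := rfl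

lemma mulVec_eq_sum_col {n d : ℕ} (M : Matrix (Fin n) (Fin d) ℝ) (u : Fin d → ℝ) :
    M *ᵥ u = ∑ j, u j • mcol M j := by
  funext i; simp [Matrix.mulVec, dotProduct, mcol, mul_comm]

set_option maxHeartbeats 1000000 in
lemma enormR_mulVec_le {n d : ℕ} (M : Matrix (Fin n) (Fin d) ℝ) (u : Fin d → ℝ) :
    enormR (M *ᵥ u) ≤ Real.sqrt (∑ j, enormR (mcol M j) ^ 2) * enormR u := by
  rw [mulVec_eq_sum_col]
  refine (enormR_sum_le _ _).trans ?_
  have h1 : ∀ j : Fin d, enormR (u j • mcol M j) = |u j| * enormR (mcol M j) :=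
    fun j => enormR_smul _ _
  simp_rw [h1]
  have hcs := Finset.sum_mul_sq_le_sq_mul_sq Finset.univ (fun j : Fin d => |u j|)
    (fun j => enormR (mcol M j))
  have hnn : (0:ℝ) ≤ ∑ j : Fin d, |u j| * enormR (mcol M j) :=
    Finset.sum_nonneg fun j _ => mul_nonneg (abs_nonneg _) (enormR_nonneg' _)
  have := Real.sqrt_le_sqrt hcs
  rw [Real.sqrt_sq hnn] at this
  refine this.trans ?_
  rw [Real.sqrt_mul (by positivity)]
  have h2 : Real.sqrt (∑ j : Fin d, |u j| ^ 2) = enormR u := by simp [enormR, sq_abs]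
  rw [h2, mul_comm]

lemma enormR_diag_le {d : ℕ} (hd : 0 < d) (lam : Fin d → ℝ) (hanti : Antitone lam)
    (hpos : ∀ j, 0 < lam j) (u : Fin d → ℝ) :
    enormR ((Matrix.diagonal lam) *ᵥ u) ≤ lam ⟨0, hd⟩ * enormR u := by
  have hl0 : 0 ≤ lam ⟨0, hd⟩ := (hpos _).le
  rw [enormR, enormR, ← Real.sqrt_sq hl0, ← Real.sqrt_mul (by positivity)]
  apply Real.sqrt_le_sqrt
  rw [Finset.mul_sum]
  apply Finset.sum_le_sum
  intro i _
  have h1 : (Matrix.diagonal lam *ᵥ u) i = lam i * u i := by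
    simp [Matrix.mulVec_diagonal]
  rw [h1, mul_pow]
  have h2 : lam i ^ 2 ≤ lam ⟨0, hd⟩ ^ 2 := by
    apply pow_le_pow_left₀ (hpos i).le
    exact hanti (by simp [Fin.le_def])
  exact mul_le_mul_of_nonneg_right h2 (sq_nonneg _)

/-- under the noisy IPG model (with `δ = 1`), the estimation error
satisfies `‖z(t+1)‖ ≤ (R(t+1)⋯R(1)) ‖z⁰(0)‖ + (1 + R(t+1) + R(t+1)R(t) + ⋯ +
R(t+1)⋯R(1)) w` for every iteration `t ≥ 0`. -/
theorem noisy_ipg_error_bound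
    (n d : ℕ) (hd : 0 < d)
    (A : Matrix (Fin n) (Fin d) ℝ) (B : Fin n → ℝ)
    (hPD : (Aᵀ * A).PosDef)
    (xstar : Fin d → ℝ) (hxstar : (Aᵀ * A).mulVec xstar = Aᵀ.mulVec B)
    (lam : Fin d → ℝ) (V : Matrix (Fin d) (Fin d) ℝ)
    (hV : Vᵀ * V = 1)
    (hdiag : Aᵀ * A = V * Matrix.diagonal lam * Vᵀ)
    (hanti : Antitone lam)
    (α w ρ : ℝ) (hα0 : 0 < α) (hα : α < 2 / lam ⟨0, hd⟩)
    (hw : 0 < w) (hρ0 : 0 < ρ) (hρ1 : ρ < 1)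
    (hcontract : ∀ v : Fin d → ℝ,
      enormR (((1 : Matrix (Fin d) (Fin d) ℝ) - α • (Aᵀ * A)).mulVec v) ≤ ρ * enormR v)
    (K K0 W : ℕ → Matrix (Fin d) (Fin d) ℝ)
    (hK0 : ∀ t, K0 (t + 1) = K t - α • ((Aᵀ * A) * K t - 1))
    (hKnoise : ∀ t, K t = K0 t + W t)
    (hW : ∀ (t : ℕ) (j : Fin d), enormR (mcol (W t) j) ≤ w)
    (z z0 wx : ℕ → Fin d → ℝ)
    (hz0 : ∀ t, z0 (t + 1) =
      ((1 : Matrix (Fin d) (Fin d) ℝ) - K (t + 1) * (Aᵀ * A)).mulVec (z t))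
    (hznoise : ∀ t, z t = z0 t + wx t)
    (hwx : ∀ t, enormR (wx t) ≤ w)
    (S R : ℕ → ℝ)
    (hS : ∀ t, S t = Real.sqrt (∑ j : Fin d,
      (ρ ^ t * enormR (mcol (K0 0) j - mcol (Aᵀ * A)⁻¹ j) +
        (∑ i ∈ Finset.range (t + 1), ρ ^ i) * w) ^ 2))
    (hR : ∀ t, R t = lam ⟨0, hd⟩ * S t) :
    ∀ t : ℕ,
      enormR (z (t + 1)) ≤
        (∏ k ∈ Finset.range (t + 1), R (k + 1)) * enormR (z0 0) +
          (∑ k ∈ Finset.range (t + 2), ∏ i ∈ Finset.range k, R (t + 1 - i)) * w := by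
  set M := Aᵀ * A with hM
  set G := M⁻¹ with hG
  -- eigenvalues are positive
  have hVVt : V * Vᵀ = 1 := mul_eq_one_comm.mp hV
  have hMV : M * V = V * Matrix.diagonal lam := by
    rw [hdiag, Matrix.mul_assoc, hV, Matrix.mul_one]
  have hlampos : ∀ j, 0 < lam j := by
    intro j
    have hcol : M *ᵥ mcol V j = lam j • mcol V j := by
      have h1 := congrArg (fun X => mcol X j) hMV
      rw [mcol_mul] at h1
      rw [h1]
      funext i
      simp [mcol, Matrix.mul_diagonal, mul_comm]
    have hdot : mcol V j ⬝ᵥ mcol V j = 1 := by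
      have h2 := congrFun (congrFun hV j) j
      simpa [Matrix.mul_apply, Matrix.one_apply, dotProduct, mcol, Matrix.transpose_apply]
        using h2
    have hne : mcol V j ≠ 0 := by
      intro h; rw [h] at hdot; simp [dotProduct] at hdot
    have h3 := hPD.dotProduct_mulVec_pos hne
    rw [hcol] at h3
    simpa [dotProduct_smul, hdot] using h3
  have hlam0 : 0 < lam ⟨0, hd⟩ := hlampos _
  -- operator norm bound for M
  have hMbound : ∀ v, enormR (M *ᵥ v) ≤ lam ⟨0, hd⟩ * enormR v := by
    intro v
    have hVt : (Vᵀ)ᵀ * Vᵀ = 1 := by rw [Matrix.transpose_transpose]; exact hVVt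
    calc enormR (M *ᵥ v) = enormR ((V * Matrix.diagonal lam * Vᵀ) *ᵥ v) := by rw [hM, ← hdiag]
      _ = enormR (V *ᵥ (Matrix.diagonal lam *ᵥ (Vᵀ *ᵥ v))) := by
          rw [Matrix.mulVec_mulVec, Matrix.mulVec_mulVec]
      _ = enormR (Matrix.diagonal lam *ᵥ (Vᵀ *ᵥ v)) := enormR_orth V hV _
      _ ≤ lam ⟨0, hd⟩ * enormR (Vᵀ *ᵥ v) := enormR_diag_le hd lam hanti hlampos _
      _ = lam ⟨0, hd⟩ * enormR v := by rw [enormR_orth Vᵀ hVt]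
  -- inverse facts
  have hdet : IsUnit M.det := isUnit_iff_ne_zero.mpr (ne_of_gt hPD.det_pos)
  have hGl : G * M = 1 := Matrix.nonsing_inv_mul M hdet
  have hGr : M * G = 1 := Matrix.mul_nonsing_inv M hdet
  -- recursion for the gain error
  have hKrec : ∀ t, K0 (t + 1) - G = (1 - α • M) * (K t - G) := by
    intro t
    rw [hK0 t, Matrix.sub_mul, Matrix.one_mul, Matrix.smul_mul, Matrix.mul_sub, hGr,
      smul_sub]
    abel
  -- column bounds
  have hcolbound : ∀ (t : ℕ) (j : Fin d),
      enormR (mcol (K t) j - mcol G j) ≤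
        ρ ^ t * enormR (mcol (K0 0) j - mcol G j) + (∑ i ∈ Finset.range (t + 1), ρ ^ i) * w := by
    intro t j
    induction t with
    | zero =>
        have h1 : mcol (K 0) j - mcol G j = (mcol (K0 0) j - mcol G j) + mcol (W 0) j := by
          rw [hKnoise 0, mcol_add]; abel
        rw [h1]
        refine (enormR_add_le _ _).trans ?_
        have he : ρ ^ 0 * enormR (mcol (K0 0) j - mcol G j) +
            (∑ i ∈ Finset.range (0 + 1), ρ ^ i) * w
            = enormR (mcol (K0 0) j - mcol G j) + w := by simp
        rw [he]
        exact add_le_add_right (hW 0 j) _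
    | succ t ih =>
        have h1 : mcol (K (t+1)) j - mcol G j = (mcol (K0 (t+1)) j - mcol G j) + mcol (W (t+1)) j := by
          rw [hKnoise (t+1), mcol_add]; abel
        rw [h1]
        refine (enormR_add_le _ _).trans ?_
        have h2 : mcol (K0 (t+1)) j - mcol G j = (1 - α • M) *ᵥ (mcol (K t) j - mcol G j) := by
          rw [← mcol_sub, hKrec t, mcol_mul, mcol_sub]
        have h3 : enormR (mcol (K0 (t+1)) j - mcol G j) ≤ ρ * enormR (mcol (K t) j - mcol G j) := by
          rw [h2]; exact hcontract _
        have h4 := h3.trans (mul_le_mul_of_nonneg_left ih hρ0.le)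
        have hgeom : (∑ i ∈ Finset.range (t+1+1), ρ ^ i)
            = ρ * ∑ i ∈ Finset.range (t+1), ρ ^ i + 1 := geom_sum_succ
        calc enormR (mcol (K0 (t+1)) j - mcol G j) + enormR (mcol (W (t+1)) j)
            ≤ ρ * (ρ ^ t * enormR (mcol (K0 0) j - mcol G j) +
                (∑ i ∈ Finset.range (t + 1), ρ ^ i) * w) + w := add_le_add h4 (hW (t+1) j)
          _ = ρ ^ (t+1) * enormR (mcol (K0 0) j - mcol G j) +
                (∑ i ∈ Finset.range (t+1+1), ρ ^ i) * w := by rw [hgeom]; ring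
  -- the key one-step contraction by R
  have hRnn : ∀ t, 0 ≤ R t := by
    intro t; rw [hR t]; exact mul_nonneg hlam0.le (by rw [hS t]; exact Real.sqrt_nonneg _)
  have hcontrR : ∀ (t : ℕ) (v : Fin d → ℝ),
      enormR (((1 : Matrix (Fin d) (Fin d) ℝ) - K t * M) *ᵥ v) ≤ R t * enormR v := by
    intro t v
    have h1 : (1 : Matrix (Fin d) (Fin d) ℝ) - K t * M = (G - K t) * M := by
      rw [Matrix.sub_mul, hGl]
    rw [h1, ← Matrix.mulVec_mulVec]
    refine (enormR_mulVec_le _ _).trans ?_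
    have hsq : Real.sqrt (∑ j, enormR (mcol (G - K t) j) ^ 2) ≤ S t := by
      rw [hS t]
      apply Real.sqrt_le_sqrt
      apply Finset.sum_le_sum
      intro j _
      have he : enormR (mcol (G - K t) j) = enormR (mcol (K t) j - mcol G j) := by
        rw [mcol_sub, ← enormR_neg (mcol (K t) j - mcol G j), neg_sub]
      rw [he]
      exact pow_le_pow_left₀ (enormR_nonneg' _) (hcolbound t j) 2
    have hSnn : 0 ≤ S t := by rw [hS t]; exact Real.sqrt_nonneg _
    calc Real.sqrt (∑ j, enormR (mcol (G - K t) j) ^ 2) * enormR (M *ᵥ v)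
        ≤ S t * (lam ⟨0, hd⟩ * enormR v) :=
          mul_le_mul hsq (hMbound v) (enormR_nonneg' _) hSnn
      _ = R t * enormR v := by rw [hR t]; ring
  -- one-step bound for z
  have hstep : ∀ t, enormR (z (t + 1)) ≤ R (t + 1) * enormR (z t) + w := by
    intro t
    rw [hznoise (t+1)]
    refine (enormR_add_le _ _).trans ?_
    refine add_le_add ?_ (hwx (t+1))
    rw [hz0 t]
    exact hcontrR (t+1) (z t)
  have hz0bound : enormR (z 0) ≤ enormR (z0 0) + w := by
    rw [hznoise 0]
    exact (enormR_add_le _ _).trans (add_le_add_right (hwx 0) _)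
  -- main induction
  intro t
  induction t with
  | zero =>
      have h1 := hstep 0
      have h2 := h1.trans (add_le_add_left
        (mul_le_mul_of_nonneg_left hz0bound (hRnn 1)) w)
      refine h2.trans (le_of_eq ?_)
      simp [Finset.prod_range_succ, Finset.sum_range_succ]
      ring
  | succ t ih =>
      have h1 := hstep (t + 1)
      have h2 := h1.trans (add_le_add_left
        (mul_le_mul_of_nonneg_left ih (hRnn (t + 2))) w)
      refine h2.trans (le_of_eq ?_)
      have hprod : (∏ k ∈ Finset.range (t + 2), R (k + 1))
          = R (t + 2) * ∏ k ∈ Finset.range (t + 1), R (k + 1) := by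
        rw [Finset.prod_range_succ]; ring
      have hsum : (∑ k ∈ Finset.range (t + 3), ∏ i ∈ Finset.range k, R (t + 2 - i))
          = 1 + R (t + 2) * ∑ k ∈ Finset.range (t + 2), ∏ i ∈ Finset.range k, R (t + 1 - i) := by
        rw [Finset.sum_range_succ']
        have h3 : ∀ k, (∏ i ∈ Finset.range (k + 1), R (t + 2 - i))
            = R (t + 2) * ∏ i ∈ Finset.range k, R (t + 1 - i) := by
          intro k
          rw [Finset.prod_range_succ']
          have h4 : ∀ i : ℕ, t + 2 - (i + 1) = t + 1 - i := fun i => by omega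
          simp_rw [h4]
          rw [Nat.sub_zero, mul_comm]
        simp_rw [h3]
        rw [← Finset.mul_sum, Finset.prod_range_zero]
        ring
      rw [hprod, hsum]
      ring
end

section
/- Under the noisy IPG model, suppose additionally that ρ < ρ_j for every j ∈ {1, …, d}. Then the sequence (R(t))_{t≥1} is strictly decreasing, lim_{t→∞} R(t) = λ₁·√d·w/(1−ρ) = w/w_bd, and if moreover w < w_bd then there exists a finite non-negative integer T′ such that R(t) < 1 for all t > T′. -/
open Matrix Finset Filter

/-- Euclidean norm of a vector in `ℝ^d`. -/
noncomputable def euclNorm {d : ℕ} (v : Fin d → ℝ) : ℝ :=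
  Real.sqrt (∑ i, v i ^ 2)

/-- under the noisy IPG model, if `ρ < ρ_j` for every `j`, then the
sequence `(R(t))_{t ≥ 1}` is strictly decreasing, `R(t) → λ₁ √d w/(1−ρ) = w/w_bd`, and
if moreover `w < w_bd` then `R(t) < 1` for all sufficiently large `t`. -/
theorem noisy_ipg_R_decreasing_and_limit
    (n d : ℕ) (hd : 0 < d)
    (A : Matrix (Fin n) (Fin d) ℝ)
    (hPD : (Aᵀ * A).PosDef)
    (lam : Fin d → ℝ) (V : Matrix (Fin d) (Fin d) ℝ)
    (hV : Vᵀ * V = 1)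
    (hdiag : Aᵀ * A = V * Matrix.diagonal lam * Vᵀ)
    (hanti : Antitone lam)
    (α w ρ : ℝ) (hα0 : 0 < α) (hα : α < 2 / lam ⟨0, hd⟩)
    (hw : 0 < w) (hρ0 : 0 < ρ) (hρ1 : ρ < 1)
    (hcontract : ∀ v : Fin d → ℝ,
      euclNorm (((1 : Matrix (Fin d) (Fin d) ℝ) - α • (Aᵀ * A)).mulVec v) ≤ ρ * euclNorm v)
    (K0 : ℕ → Matrix (Fin d) (Fin d) ℝ)
    (S R : ℕ → ℝ)
    (hS : ∀ t, S t = Real.sqrt (∑ j : Fin d,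
      (ρ ^ t * euclNorm (mcol (K0 0) j - mcol (Aᵀ * A)⁻¹ j) +
        (∑ i ∈ Finset.range (t + 1), ρ ^ i) * w) ^ 2))
    (hR : ∀ t, R t = lam ⟨0, hd⟩ * S t)
    (hρj : ∀ j : Fin d,
      ρ < euclNorm (mcol (K0 0) j - mcol (Aᵀ * A)⁻¹ j) /
            (euclNorm (mcol (K0 0) j - mcol (Aᵀ * A)⁻¹ j) + w)) :
    (∀ t : ℕ, 1 ≤ t → R (t + 1) < R t) ∧
    Filter.Tendsto R Filter.atTop
      (nhds (lam ⟨0, hd⟩ * Real.sqrt d * w / (1 - ρ))) ∧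
    lam ⟨0, hd⟩ * Real.sqrt d * w / (1 - ρ) =
      w / ((1 - ρ) / (lam ⟨0, hd⟩ * Real.sqrt d)) ∧
    (w < (1 - ρ) / (lam ⟨0, hd⟩ * Real.sqrt d) →
      ∃ T' : ℕ, ∀ t : ℕ, T' < t → R t < 1) := by
  set lam0 := lam ⟨0, hd⟩ with hlam0def
  have hlam0 : 0 < lam0 := by
    rcases lt_trichotomy lam0 0 with h | h | h
    · have : 2 / lam0 < 0 := div_neg_of_pos_of_neg (by norm_num) h
      linarith
    · rw [h] at hα; simp at hα; linarith
    · exact h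
  have h1ρ : 0 < 1 - ρ := by linarith
  set a : Fin d → ℝ := fun j => euclNorm (mcol (K0 0) j - mcol (Aᵀ * A)⁻¹ j) with hadef
  have ha0 : ∀ j, 0 ≤ a j := fun j => Real.sqrt_nonneg _
  have hkey : ∀ j, ρ * (a j + w) < a j := by
    intro j
    have h := hρj j
    have hpos : 0 < a j + w := by have := ha0 j; linarith
    exact (lt_div_iff₀ hpos).1 h
  set f : ℕ → Fin d → ℝ :=
    fun t j => ρ ^ t * a j + (∑ i ∈ Finset.range (t + 1), ρ ^ i) * w with hfdef
  have hSf : ∀ t, S t = Real.sqrt (∑ j : Fin d, f t j ^ 2) := hS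
  have hg0 : ∀ t, (0 : ℝ) ≤ ∑ i ∈ Finset.range (t + 1), ρ ^ i :=
    fun t => Finset.sum_nonneg fun i _ => pow_nonneg hρ0.le i
  have hf0 : ∀ t j, 0 ≤ f t j := by
    intro t j
    have := ha0 j
    have := hg0 t
    positivity
  have hfdec : ∀ t j, f (t + 1) j < f t j := by
    intro t j
    have hpt : (0 : ℝ) < ρ ^ t := pow_pos hρ0 t
    have h1 : ρ ^ t * (ρ * (a j + w)) < ρ ^ t * a j :=
      (mul_lt_mul_iff_right₀ hpt).2 (hkey j)
    have h2 : (∑ i ∈ Finset.range (t + 1 + 1), ρ ^ i)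
        = (∑ i ∈ Finset.range (t + 1), ρ ^ i) + ρ ^ (t + 1) :=
      Finset.sum_range_succ _ _
    simp only [hfdef, h2]
    ring_nf
    ring_nf at h1
    nlinarith [hg0 t]
  have hsumdec : ∀ t, (∑ j : Fin d, f (t + 1) j ^ 2) < ∑ j : Fin d, f t j ^ 2 := by
    intro t
    refine Finset.sum_lt_sum_of_nonempty ?_ ?_
    · exact Finset.univ_nonempty_iff.2 ⟨⟨0, hd⟩⟩
    · intro j _
      exact pow_lt_pow_left₀ (hfdec t j) (hf0 (t + 1) j) (by norm_num)
  have hSdec : ∀ t, S (t + 1) < S t := by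
    intro t
    rw [hSf, hSf]
    exact Real.sqrt_lt_sqrt (Finset.sum_nonneg fun j _ => sq_nonneg _) (hsumdec t)
  have hRdec : ∀ t : ℕ, 1 ≤ t → R (t + 1) < R t := by
    intro t _
    rw [hR, hR]
    exact (mul_lt_mul_iff_right₀ hlam0).2 (hSdec t)
  -- limits
  have hρabs : |ρ| < 1 := by rw [abs_of_pos hρ0]; exact hρ1
  have hgeom : Filter.Tendsto (fun t : ℕ => ∑ i ∈ Finset.range (t + 1), ρ ^ i)
      Filter.atTop (nhds (1 - ρ)⁻¹) := by
    have h := (hasSum_geometric_of_lt_one hρ0.le hρ1).tendsto_sum_nat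
    exact h.comp (tendsto_add_atTop_nat 1)
  have hpow : Filter.Tendsto (fun t : ℕ => ρ ^ t) Filter.atTop (nhds 0) :=
    tendsto_pow_atTop_nhds_zero_of_lt_one hρ0.le hρ1
  have hfj : ∀ j, Filter.Tendsto (fun t => f t j) Filter.atTop
      (nhds ((1 - ρ)⁻¹ * w)) := by
    intro j
    have h1 : Filter.Tendsto (fun t : ℕ => ρ ^ t * a j) Filter.atTop (nhds 0) := by
      simpa using hpow.mul_const (a j)
    have h2 := hgeom.mul_const w
    simpa using h1.add h2
  have hSten : Filter.Tendsto S Filter.atTop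
      (nhds (Real.sqrt (∑ _j : Fin d, ((1 - ρ)⁻¹ * w) ^ 2))) := by
    have hsum : Filter.Tendsto (fun t => ∑ j : Fin d, f t j ^ 2) Filter.atTop
        (nhds (∑ _j : Fin d, ((1 - ρ)⁻¹ * w) ^ 2)) :=
      tendsto_finset_sum _ fun j _ => (hfj j).pow 2
    have := (Real.continuous_sqrt.continuousAt).tendsto.comp hsum
    refine Filter.Tendsto.congr ?_ this
    intro t
    exact (hSf t).symm
  have hc : (0 : ℝ) < Real.sqrt d := Real.sqrt_pos.2 (by exact_mod_cast hd)
  have hvalue : Real.sqrt (∑ _j : Fin d, ((1 - ρ)⁻¹ * w) ^ 2)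
      = Real.sqrt d * ((1 - ρ)⁻¹ * w) := by
    rw [Finset.sum_const, Finset.card_univ, Fintype.card_fin, nsmul_eq_mul]
    rw [Real.sqrt_mul (by positivity), Real.sqrt_sq (by positivity)]
  have hLeq : lam0 * (Real.sqrt d * ((1 - ρ)⁻¹ * w)) = lam0 * Real.sqrt d * w / (1 - ρ) := by
    field_simp
  have hRten : Filter.Tendsto R Filter.atTop (nhds (lam0 * Real.sqrt d * w / (1 - ρ))) := by
    have h := hSten.const_mul lam0
    rw [hvalue, hLeq] at h
    refine Filter.Tendsto.congr ?_ h
    intro t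
    exact (hR t).symm
  have heq : lam0 * Real.sqrt d * w / (1 - ρ) = w / ((1 - ρ) / (lam0 * Real.sqrt d)) := by
    rw [div_div_eq_mul_div, mul_comm w]
  refine ⟨hRdec, hRten, heq, ?_⟩
  intro hwbd
  have hL1 : lam0 * Real.sqrt d * w / (1 - ρ) < 1 := by
    rw [div_lt_one h1ρ]
    have h1 : lam0 * Real.sqrt d * w < lam0 * Real.sqrt d * ((1 - ρ) / (lam0 * Real.sqrt d)) :=
      (mul_lt_mul_iff_right₀ (by positivity)).2 hwbd
    have h2 : lam0 * Real.sqrt d * ((1 - ρ) / (lam0 * Real.sqrt d)) = 1 - ρ := by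
      field_simp
    linarith
  have hev : ∀ᶠ t in Filter.atTop, R t < 1 := hRten.eventually (gt_mem_nhds hL1)
  rcases Filter.eventually_atTop.1 hev with ⟨N, hN⟩
  exact ⟨N, fun t ht => hN t ht.le⟩
end
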